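/- For x₁, x₂ ≥ 0, y₁, y₂ > 0, and β > 0, the function f(λ) = (λx₁ + (1−λ)x₂)^{1+β} (λy₁ + (1−λ)y₂)^{−β} is convex on [0,1]. -/

import Mathlib

lemma pef_key (β a b c d : ℝ) (ha : 0 ≤ a) (hb : 0 ≤ b) (hc : 0 < c) (hd : 0 < d)
    (hβ : 0 < β) :
    (a + b) ^ ((1 : ℝ) + β) * (c + d) ^ (-β) ≤
      a ^ ((1 : ℝ) + β) * c ^ (-β) + b ^ ((1 : ℝ) + β) * d ^ (-β) := by
  set p : ℝ := 1 + β with hp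
  have hS : (0 : ℝ) < c + d := by linarith
  have hp1 : (1 : ℝ) ≤ p := by simp [hp]; linarith
  have hconv := (convexOn_rpow hp1).2 (x := a / c) (y := b / d)
    (Set.mem_Ici.2 (div_nonneg ha hc.le)) (Set.mem_Ici.2 (div_nonneg hb hd.le))
    (div_nonneg hc.le hS.le) (div_nonneg hd.le hS.le)
    (by field_simp)
  simp only [smul_eq_mul] at hconv
  have harg : c / (c + d) * (a / c) + d / (c + d) * (b / d) = (a + b) / (c + d) := by
    field_simp
  rw [harg, Real.div_rpow (by linarith) hS.le, Real.div_rpow ha hc.le,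
    Real.div_rpow hb hd.le] at hconv
  have h2 := mul_le_mul_of_nonneg_left hconv hS.le
  have hcp : (0:ℝ) < c ^ p := Real.rpow_pos_of_pos hc p
  have hdp : (0:ℝ) < d ^ p := Real.rpow_pos_of_pos hd p
  have hSp : (0:ℝ) < (c + d) ^ p := Real.rpow_pos_of_pos hS p
  have eL : (c + d) * ((a + b) ^ p / (c + d) ^ p) = (a + b) ^ p * (c + d) ^ (-β) := by
    rw [show -β = 1 - p by simp [hp], Real.rpow_sub hS, Real.rpow_one]
    field_simp
  have eR : (c + d) * (c / (c + d) * (a ^ p / c ^ p) + d / (c + d) * (b ^ p / d ^ p))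
      = a ^ p * c ^ (-β) + b ^ p * d ^ (-β) := by
    rw [show -β = 1 - p by simp [hp], Real.rpow_sub hc, Real.rpow_sub hd,
      Real.rpow_one]
    field_simp
    simp only [Real.rpow_one]; ring
  rw [eL, eR] at h2
  exact h2


/-- For `x₁, x₂ ≥ 0`, `y₁, y₂ > 0` and `β > 0`, the function
`λ ↦ (λx₁+(1−λ)x₂)^{1+β} (λy₁+(1−λ)y₂)^{−β}` is convex on `[0,1]`. -/
theorem pef_ratio_convex (x₁ x₂ y₁ y₂ β : ℝ)
    (hx₁ : 0 ≤ x₁) (hx₂ : 0 ≤ x₂) (hy₁ : 0 < y₁) (hy₂ : 0 < y₂) (hβ : 0 < β) :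
    ConvexOn ℝ (Set.Icc (0 : ℝ) 1)
      (fun l : ℝ =>
        (l * x₁ + (1 - l) * x₂) ^ ((1 : ℝ) + β) * (l * y₁ + (1 - l) * y₂) ^ (-β)) := by
  constructor
  · exact convex_Icc 0 1
  intro u hu v hv t s ht hs hts
  simp only [smul_eq_mul]
  have hAu : 0 ≤ u * x₁ + (1 - u) * x₂ := by
    have := hu.1; have := hu.2
    have : 0 ≤ 1 - u := by linarith
    positivity
  have hAv : 0 ≤ v * x₁ + (1 - v) * x₂ := by
    have := hv.1; have := hv.2
    have : 0 ≤ 1 - v := by linarith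
    positivity
  have hBu : 0 < u * y₁ + (1 - u) * y₂ := by
    rcases eq_or_lt_of_le hu.1 with h | h
    · rw [← h]; simpa
    · have h2 := hu.2
      have : 0 < u * y₁ := mul_pos h hy₁
      nlinarith
  have hBv : 0 < v * y₁ + (1 - v) * y₂ := by
    rcases eq_or_lt_of_le hv.1 with h | h
    · rw [← h]; simpa
    · have h2 := hv.2
      have : 0 < v * y₁ := mul_pos h hy₁
      nlinarith
  have hax : (t * u + s * v) * x₁ + (1 - (t * u + s * v)) * x₂
      = t * (u * x₁ + (1 - u) * x₂) + s * (v * x₁ + (1 - v) * x₂) := by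
    have : s = 1 - t := by linarith
    subst this; ring
  have hay : (t * u + s * v) * y₁ + (1 - (t * u + s * v)) * y₂
      = t * (u * y₁ + (1 - u) * y₂) + s * (v * y₁ + (1 - v) * y₂) := by
    have : s = 1 - t := by linarith
    subst this; ring
  rw [hax, hay]
  rcases eq_or_lt_of_le ht with h0 | htpos
  · have hs1 : s = 1 := by linarith
    rw [← h0, hs1]; simp
  rcases eq_or_lt_of_le hs with h0 | hspos
  · have ht1 : t = 1 := by linarith
    rw [← h0, ht1]; simp
  have key := pef_key β (t * (u * x₁ + (1 - u) * x₂)) (s * (v * x₁ + (1 - v) * x₂))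
    (t * (u * y₁ + (1 - u) * y₂)) (s * (v * y₁ + (1 - v) * y₂))
    (mul_nonneg ht hAu) (mul_nonneg hs hAv) (mul_pos htpos hBu) (mul_pos hspos hBv) hβ
  have hexp : ∀ w : ℝ, 0 < w → ∀ A B : ℝ, 0 ≤ A → 0 < B →
      (w * A) ^ ((1:ℝ) + β) * (w * B) ^ (-β) = w * (A ^ ((1:ℝ) + β) * B ^ (-β)) := by
    intro w hw A B hA hB
    rw [Real.mul_rpow hw.le hA, Real.mul_rpow hw.le hB.le,
      show w ^ ((1:ℝ) + β) * A ^ ((1:ℝ)+β) * (w ^ (-β) * B ^ (-β))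
        = (w ^ ((1:ℝ)+β) * w ^ (-β)) * (A ^ ((1:ℝ)+β) * B ^ (-β)) by ring,
      ← Real.rpow_add hw]
    norm_num
  rw [hexp t htpos _ _ hAu hBu, hexp s hspos _ _ hAv hBv] at key
  exact key
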